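/- For the sup norm on ℝⁿ, m₁(ℝⁿ, ‖·‖_∞) = 1/2ⁿ. -/

import Mathlib

open MeasureTheory Filter Set Pointwise

noncomputable def box (n : ℕ) (R : ℝ) : Set (Fin n → ℝ) := {x | ∀ i, |x i| ≤ R}

noncomputable def density (n : ℕ) (A : Set (Fin n → ℝ)) : ℝ :=
  Filter.limsup (fun R : ℝ =>
    (volume (A ∩ box n R)).toReal / (volume (box n R)).toReal) Filter.atTop

def AvoidsOne (n : ℕ) (N : (Fin n → ℝ) → ℝ) (A : Set (Fin n → ℝ)) : Prop :=
  ∀ x ∈ A, ∀ y ∈ A, N (x - y) ≠ 1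

noncomputable def m1 (n : ℕ) (N : (Fin n → ℝ) → ℝ) : ℝ :=
  sSup {d : ℝ | ∃ A : Set (Fin n → ℝ), MeasurableSet A ∧ AvoidsOne n N A ∧ d = density n A}

noncomputable def polyNorm (n : ℕ) (P : Set (Fin n → ℝ)) (x : Fin n → ℝ) : ℝ :=
  sInf {l : ℝ | 0 ≤ l ∧ x ∈ l • P}

def IsSymmPolytope (n : ℕ) (P : Set (Fin n → ℝ)) : Prop :=
  Convex ℝ P ∧ (∀ x ∈ P, -x ∈ P) ∧ ∃ F : Finset (Fin n → ℝ), P = convexHull ℝ (↑F : Set (Fin n → ℝ))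

def TilesBy (n : ℕ) (P : Set (Fin n → ℝ)) (Λ : Set (Fin n → ℝ)) : Prop :=
  (⋃ l ∈ Λ, (l +ᵥ P)) = Set.univ ∧
  (Λ.Pairwise fun a b => interior (a +ᵥ P) ∩ interior (b +ᵥ P) = ∅)

open scoped ENNReal

noncomputable def S1 : Set ℝ := ⋃ k : ℤ, Ioo (2*k) (2*k+1)

lemma S1_meas : MeasurableSet S1 := MeasurableSet.iUnion (fun k => measurableSet_Ioo)

lemma S1_avoid : ∀ s ∈ S1, ∀ t ∈ S1, |s - t| ≠ 1 := by
  intro s hs t ht h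
  obtain ⟨k, hk⟩ := mem_iUnion.mp hs
  obtain ⟨j, hj⟩ := mem_iUnion.mp ht
  simp only [mem_Ioo] at hk hj
  rcases abs_eq (by norm_num : (0:ℝ) ≤ 1) |>.mp h with h1 | h1
  · have h2 : (0:ℝ) < k - j := by push_cast; linarith
    have h3 : (k:ℝ) - j < 1 := by push_cast; linarith
    have : (0:ℤ) < k - j := by exact_mod_cast h2
    have : (k:ℤ) - j < 1 := by exact_mod_cast h3
    omega
  · have h2 : (0:ℝ) < j - k := by push_cast; linarith
    have h3 : (j:ℝ) - k < 1 := by push_cast; linarith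
    have : (0:ℤ) < j - k := by exact_mod_cast h2
    have : (j:ℤ) - k < 1 := by exact_mod_cast h3
    omega


lemma ioo_disj : Pairwise (Function.onFun Disjoint (fun k : ℤ => Ioo (2*(k:ℝ)) (2*k+1))) := by
  intro k j hkj
  apply Set.disjoint_left.mpr
  intro x hx hx'
  simp only [mem_Ioo] at hx hx'
  rcases lt_or_gt_of_ne hkj with h | h
  · have : (k:ℝ) + 1 ≤ j := by exact_mod_cast h
    linarith
  · have : (j:ℝ) + 1 ≤ k := by exact_mod_cast h
    linarith

lemma vol_finset_union (F : Finset ℤ) :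
    volume (⋃ k ∈ F, Ioo (2*(k:ℝ)) (2*k+1)) = F.card := by
  rw [measure_biUnion_finset (ioo_disj.set_pairwise _) (fun k _ => measurableSet_Ioo)]
  rw [Finset.sum_congr rfl (fun k _ => by
    rw [Real.volume_Ioo, show 2*(k:ℝ)+1 - 2*k = 1 by ring, ENNReal.ofReal_one])]
  simp

lemma vol_S1_lower (R : ℝ) (hR : 2 ≤ R) :
    ENNReal.ofReal (R - 2) ≤ volume (S1 ∩ Icc (-R) R) := by
  set m : ℕ := ⌊R/2⌋₊ with hm
  have h2m : 2*(m:ℝ) ≤ R := by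
    have := Nat.floor_le (by linarith : (0:ℝ) ≤ R/2)
    linarith
  have hsub : (⋃ k ∈ Finset.Icc (-(m:ℤ)) (m-1), Ioo (2*(k:ℝ)) (2*k+1)) ⊆ S1 ∩ Icc (-R) R := by
    intro x hx
    simp only [mem_iUnion, Finset.mem_Icc] at hx
    obtain ⟨k, ⟨hk1, hk2⟩, hx⟩ := hx
    simp only [mem_Ioo] at hx
    have hmem : x ∈ S1 := mem_iUnion.mpr ⟨k, by simp only [mem_Ioo]; exact hx⟩
    have h5 : -(m:ℝ) ≤ k := by exact_mod_cast hk1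
    have h6 : (k:ℝ) ≤ m - 1 := by exact_mod_cast hk2
    exact ⟨hmem, by nlinarith [hx.1], by nlinarith [hx.2]⟩
  calc ENNReal.ofReal (R - 2) ≤ ((Finset.Icc (-(m:ℤ)) (m-1)).card : ℝ≥0∞) := by
        rw [Int.card_Icc]
        have hcard : ((m:ℤ) - 1 + 1 - -(m:ℤ)).toNat = 2*m := by omega
        rw [hcard]
        rw [← ENNReal.ofReal_natCast]
        apply ENNReal.ofReal_le_ofReal
        push_cast
        have : R / 2 - 1 < m := Nat.sub_one_lt_floor (R/2)
        linarith
    _ = volume (⋃ k ∈ Finset.Icc (-(m:ℤ)) (m-1), Ioo (2*(k:ℝ)) (2*k+1)) := (vol_finset_union _).symm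
    _ ≤ volume (S1 ∩ Icc (-R) R) := measure_mono hsub

lemma vol_S1_upper (R : ℝ) (hR : 0 ≤ R) :
    volume (S1 ∩ Icc (-R) R) ≤ ENNReal.ofReal (R + 4) := by
  set m : ℕ := ⌈R/2⌉₊ with hm
  have h2m : R ≤ 2*(m:ℝ) := by
    have := Nat.le_ceil (R/2)
    linarith
  have hsub : S1 ∩ Icc (-R) R ⊆ ⋃ k ∈ Finset.Icc (-(m:ℤ)-1) m, Ioo (2*(k:ℝ)) (2*k+1) := by
    rintro x ⟨hx1, hx2, hx3⟩
    obtain ⟨k, hk⟩ := mem_iUnion.mp hx1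
    simp only [mem_Ioo] at hk
    simp only [mem_iUnion, Finset.mem_Icc]
    refine ⟨k, ⟨?_, ?_⟩, by simp [mem_Ioo]; exact hk⟩
    · have : -(2*(m:ℝ)) - 1 < 2*k := by linarith [hk.2]
      have h' : (-(m:ℝ)) - 1 < k := by linarith
      have : -(m:ℤ) - 1 < k + 1 := by exact_mod_cast (by push_cast; linarith : (-(m:ℝ)) - 1 < k + 1)
      have h'' : -(m:ℤ) - 1 ≤ k := by
        by_contra hc
        push_neg at hc
        have : (k:ℝ) < -(m:ℝ) - 1 := by exact_mod_cast hc
        linarith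
      exact h''
    · have : 2*(k:ℝ) < 2*m := by linarith [hk.1]
      have : (k:ℝ) < m := by linarith
      have : (k:ℤ) < m := by exact_mod_cast this
      omega
  calc volume (S1 ∩ Icc (-R) R) ≤ volume (⋃ k ∈ Finset.Icc (-(m:ℤ)-1) m, Ioo (2*(k:ℝ)) (2*k+1)) :=
        measure_mono hsub
    _ = ((Finset.Icc (-(m:ℤ)-1) m).card : ℝ≥0∞) := vol_finset_union _
    _ ≤ ENNReal.ofReal (R + 4) := by
        rw [Int.card_Icc]
        have hcard : ((m:ℤ) + 1 - (-(m:ℤ)-1)).toNat = 2*m + 2 := by omega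
        rw [hcard, ← ENNReal.ofReal_natCast]
        apply ENNReal.ofReal_le_ofReal
        push_cast
        have : (m:ℝ) < R/2 + 1 := by
          have := Nat.ceil_lt_add_one (by linarith : (0:ℝ) ≤ R/2)
          linarith
        linarith

lemma box_eq_pi (n : ℕ) (R : ℝ) : box n R = Set.pi univ (fun _ : Fin n => Icc (-R) R) := by
  ext x
  simp [box, Set.mem_pi, abs_le, Pi.le_def, forall_and]

lemma box_meas (n : ℕ) (R : ℝ) : MeasurableSet (box n R) := by
  rw [box_eq_pi]; exact MeasurableSet.univ_pi (fun _ => measurableSet_Icc)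

lemma vol_box (n : ℕ) (R : ℝ) : volume (box n R) = (ENNReal.ofReal (2*R))^n := by
  rw [box_eq_pi, volume_pi_pi]
  simp [Real.volume_Icc]
  ring_nf
  rw [ENNReal.ofReal_mul' (by norm_num), mul_pow, ENNReal.ofReal_ofNat]


noncomputable def vS (R : ℝ) : ℝ := (volume (S1 ∩ Icc (-R) R)).toReal

lemma vS_fin (R : ℝ) : volume (S1 ∩ Icc (-R) R) ≠ ⊤ := by
  apply ne_of_lt
  calc volume (S1 ∩ Icc (-R) R) ≤ volume (Icc (-R) R) := measure_mono inter_subset_right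
    _ < ⊤ := by rw [Real.volume_Icc]; exact ENNReal.ofReal_lt_top

lemma vS_lower (R : ℝ) (hR : 2 ≤ R) : R - 2 ≤ vS R := by
  have := vol_S1_lower R hR
  have h := ENNReal.toReal_le_toReal (by simp) (vS_fin R) |>.mpr this
  rwa [ENNReal.toReal_ofReal (by linarith)] at h

lemma vS_upper (R : ℝ) (hR : 0 ≤ R) : vS R ≤ R + 4 := by
  have := vol_S1_upper R hR
  have h := ENNReal.toReal_le_toReal (vS_fin R) (by simp) |>.mpr this
  rwa [ENNReal.toReal_ofReal (by linarith)] at h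

lemma vS_ratio_tendsto : Filter.Tendsto (fun R => vS R / (2*R)) Filter.atTop (nhds (1/2)) := by
  have hinv : Filter.Tendsto (fun R : ℝ => R⁻¹) Filter.atTop (nhds 0) := tendsto_inv_atTop_zero
  have hlow : Filter.Tendsto (fun R : ℝ => 1/2 - R⁻¹) Filter.atTop (nhds (1/2)) := by
    have := (tendsto_const_nhds (α := ℝ) (x := (1:ℝ)/2) (f := Filter.atTop)).sub hinv
    simpa using this
  have hhigh : Filter.Tendsto (fun R : ℝ => 1/2 + 2*R⁻¹) Filter.atTop (nhds (1/2)) := by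
    have := (tendsto_const_nhds (α := ℝ) (x := (1:ℝ)/2) (f := Filter.atTop)).add
      ((tendsto_const_nhds (α := ℝ) (x := (2:ℝ)) (f := Filter.atTop)).mul hinv)
    simpa using this
  apply tendsto_of_tendsto_of_tendsto_of_le_of_le' hlow hhigh
  · filter_upwards [Filter.eventually_ge_atTop (2:ℝ)] with R hR
    have hR0 : (0:ℝ) ≤ 2*R := by linarith
    have h1 : (R - 2)/(2*R) ≤ vS R / (2*R) :=
      div_le_div_of_nonneg_right (vS_lower R hR) hR0 |>.trans_eq rfl
    calc 1/2 - R⁻¹ = (R - 2)/(2*R) := by field_simp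
      _ ≤ vS R / (2*R) := h1
  · filter_upwards [Filter.eventually_ge_atTop (2:ℝ)] with R hR
    have hR0 : (0:ℝ) ≤ 2*R := by linarith
    calc vS R / (2*R) ≤ (R + 4)/(2*R) :=
          div_le_div_of_nonneg_right (vS_upper R (by linarith)) hR0 |>.trans_eq rfl
      _ = 1/2 + 2*R⁻¹ := by field_simp; ring

lemma density_S1_pi (n : ℕ) (hn : 1 ≤ n) :
    density n (Set.pi univ (fun _ : Fin n => S1)) = 1 / 2 ^ n := by
  have heq : (fun R : ℝ => (volume ((Set.pi univ (fun _ : Fin n => S1)) ∩ box n R)).toReal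
      / (volume (box n R)).toReal) =ᶠ[Filter.atTop] (fun R => (vS R / (2*R))^n) := by
    filter_upwards [Filter.eventually_gt_atTop (0:ℝ)] with R hR
    have hnum : volume ((Set.pi univ (fun _ : Fin n => S1)) ∩ box n R)
        = (volume (S1 ∩ Icc (-R) R))^n := by
      rw [box_eq_pi, ← Set.pi_inter_distrib, volume_pi_pi]
      simp
    rw [hnum, vol_box, ENNReal.toReal_pow, ENNReal.toReal_pow,
      ENNReal.toReal_ofReal (by linarith : (0:ℝ) ≤ 2*R), ← div_pow]
    rfl
  have hg : Filter.Tendsto (fun R => (vS R / (2*R))^n) Filter.atTop (nhds ((1/2)^n)) :=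
    vS_ratio_tendsto.pow n
  have := (hg.congr' heq.symm).limsup_eq
  rw [density, this, div_pow, one_pow]

noncomputable def Tv (n : ℕ) (ε : Fin n → Bool) : Fin n → ℝ := fun i => if ε i then 1 else 0

lemma key_ineq (n : ℕ) (hn : 1 ≤ n) (A : Set (Fin n → ℝ)) (hA : MeasurableSet A)
    (hav : AvoidsOne n (fun x => ⨆ i, |x i|) A) (R : ℝ) :
    2^n * volume (A ∩ box n R) ≤ volume (box n (R+1)) := by
  set B : Set (Fin n → ℝ) := A ∩ box n R with hB
  have hBmeas : MeasurableSet B := hA.inter (box_meas n R)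
  have hdisj : ∀ ε ε' : Fin n → Bool, ε ≠ ε' → Disjoint (Tv n ε +ᵥ B) (Tv n ε' +ᵥ B) := by
    intro ε ε' hne
    rw [Set.disjoint_left]
    rintro x hx hx'
    obtain ⟨a, ha, rfl⟩ := hx
    obtain ⟨a', ha', hEq⟩ := hx'
    have haA : a ∈ A := ha.1
    have ha'A : a' ∈ A := ha'.1
    have hsub : a - a' = Tv n ε' - Tv n ε := by
      have : Tv n ε' + a' = Tv n ε + a := hEq
      funext i
      have := congrFun this i
      simp only [Pi.add_apply, Pi.sub_apply] at *
      linarith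
    obtain ⟨i0, hi0⟩ : ∃ i, ε i ≠ ε' i := by
      by_contra hc
      push_neg at hc
      exact hne (funext hc)
    have hcoord : ∀ i, |(a - a') i| ≤ 1 := by
      intro i
      rw [hsub]
      simp only [Pi.sub_apply, Tv]
      rcases Bool.dichotomy (ε i) with h | h <;> rcases Bool.dichotomy (ε' i) with h' | h' <;>
        simp [h, h']
    have hcoord0 : |(a - a') i0| = 1 := by
      rw [hsub]
      simp only [Pi.sub_apply, Tv]
      rcases Bool.dichotomy (ε i0) with h | h <;> rcases Bool.dichotomy (ε' i0) with h' | h' <;>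
        simp [h, h'] <;> simp [h, h'] at hi0
    have hne1 : (⨆ i, |(a - a') i|) ≠ 1 := hav a haA a' ha'A
    apply hne1
    haveI : Nonempty (Fin n) := ⟨⟨0, hn⟩⟩
    show (⨆ i, |(a - a') i|) = 1
    apply le_antisymm
    · exact ciSup_le hcoord
    · rw [← hcoord0]
      exact le_ciSup (f := fun i => |(a - a') i|) (Set.Finite.bddAbove (Set.finite_range _)) i0
  have hsubbox : ∀ ε : Fin n → Bool, (Tv n ε +ᵥ B) ⊆ box n (R+1) := by
    intro ε x hx
    obtain ⟨a, ha, rfl⟩ := hx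
    intro i
    have h1 : |a i| ≤ R := ha.2 i
    have h2 : |Tv n ε i| ≤ 1 := by
      simp only [Tv]
      rcases Bool.dichotomy (ε i) with h | h <;> simp [h]
    calc |(Tv n ε + a) i| = |Tv n ε i + a i| := rfl
      _ ≤ |Tv n ε i| + |a i| := abs_add_le _ _
      _ ≤ R + 1 := by linarith
  calc 2^n * volume B = ∑ ε : Fin n → Bool, volume (Tv n ε +ᵥ B) := by
        rw [Finset.sum_congr rfl (fun ε _ => measure_vadd _ _ _)]
        simp [Finset.card_univ]
    _ = volume (⋃ ε ∈ (Finset.univ : Finset (Fin n → Bool)), (Tv n ε +ᵥ B)) := by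
        rw [measure_biUnion_finset]
        · intro ε _ ε' _ hne
          exact hdisj ε ε' hne
        · exact fun ε _ => hBmeas.const_vadd _
    _ ≤ volume (box n (R+1)) := measure_mono (by
        apply Set.iUnion₂_subset
        intro ε _
        exact hsubbox ε)

lemma density_le (n : ℕ) (hn : 1 ≤ n) (A : Set (Fin n → ℝ)) (hA : MeasurableSet A)
    (hav : AvoidsOne n (fun x => ⨆ i, |x i|) A) : density n A ≤ 1 / 2^n := by
  set f : ℝ → ℝ := fun R => (volume (A ∩ box n R)).toReal / (volume (box n R)).toReal with hf
  set g : ℝ → ℝ := fun R => (1/2^n) * (1 + R⁻¹)^n with hg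
  have hgt : Filter.Tendsto g Filter.atTop (nhds (1/2^n)) := by
    have : Filter.Tendsto (fun R : ℝ => (1 + R⁻¹)^n) Filter.atTop (nhds 1) := by
      have h1 : Filter.Tendsto (fun R : ℝ => 1 + R⁻¹) Filter.atTop (nhds 1) := by
        have := (tendsto_const_nhds (α := ℝ) (x := (1:ℝ)) (f := Filter.atTop)).add
          tendsto_inv_atTop_zero
        simpa using this
      simpa using h1.pow n
    have h2 := (tendsto_const_nhds (α := ℝ) (x := (1:ℝ)/2^n) (f := Filter.atTop)).mul this
    simpa [hg, one_div] using h2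
  have hle : ∀ᶠ R in Filter.atTop, f R ≤ g R := by
    filter_upwards [Filter.eventually_ge_atTop (1:ℝ)] with R hR
    have hR0 : (0:ℝ) < R := by linarith
    have hfin : volume (A ∩ box n R) ≠ ⊤ := by
      apply ne_of_lt
      calc volume (A ∩ box n R) ≤ volume (box n R) := measure_mono inter_subset_right
        _ < ⊤ := by rw [vol_box]; exact ENNReal.pow_lt_top ENNReal.ofReal_lt_top
    have hkey := key_ineq n hn A hA hav R
    have hkeyR : 2^n * (volume (A ∩ box n R)).toReal ≤ (2*(R+1))^n := by
      have hl : ((2:ℝ≥0∞)^n * volume (A ∩ box n R)).toReal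
          = 2^n * (volume (A ∩ box n R)).toReal := by
        rw [ENNReal.toReal_mul]
        congr 1
      have hr : (volume (box n (R+1))).toReal = (2*(R+1))^n := by
        rw [vol_box, ENNReal.toReal_pow, ENNReal.toReal_ofReal (by linarith)]
      rw [← hl, ← hr]
      apply ENNReal.toReal_mono
      · rw [vol_box]; exact (ENNReal.pow_lt_top ENNReal.ofReal_lt_top).ne
      · exact hkey
    have hvol : (volume (box n R)).toReal = (2*R)^n := by
      rw [vol_box, ENNReal.toReal_pow, ENNReal.toReal_ofReal (by linarith)]
    have hpos : (0:ℝ) < (2*R)^n := pow_pos (by linarith) n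
    rw [hf, hg]
    simp only
    rw [hvol, div_le_iff₀ hpos]
    have e1 : (1 + R⁻¹) * (2*R) = 2*(R+1) := by field_simp
    have hexp : (1/2^n) * (1 + R⁻¹)^n * (2*R)^n = (R+1)^n := by
      calc (1/2^n) * (1 + R⁻¹)^n * (2*R)^n = (1/2^n) * ((1+R⁻¹)*(2*R))^n := by
            rw [mul_pow (1+R⁻¹) (2*R)]; ring
        _ = (1/2^n) * (2*(R+1))^n := by rw [e1]
        _ = (R+1)^n := by rw [mul_pow]; field_simp
    rw [hexp]
    have h2 : (2*(R+1))^n = 2^n * (R+1)^n := by rw [mul_pow]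
    have h2pos : (0:ℝ) < 2^n := pow_pos (by norm_num) n
    nlinarith [hkeyR]
  have hbdd : Filter.IsBoundedUnder (· ≤ ·) Filter.atTop g := hgt.isBoundedUnder_le
  have hcob : Filter.IsCoboundedUnder (· ≤ ·) Filter.atTop f :=
    Filter.isCoboundedUnder_le_of_le Filter.atTop (x := 0)
      (fun R => div_nonneg ENNReal.toReal_nonneg ENNReal.toReal_nonneg)
  calc density n A = Filter.limsup f Filter.atTop := rfl
    _ ≤ Filter.limsup g Filter.atTop := Filter.limsup_le_limsup hle hcob hbdd
    _ = 1/2^n := hgt.limsup_eq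

lemma A0_avoid (n : ℕ) (hn : 1 ≤ n) :
    AvoidsOne n (fun x => ⨆ i, |x i|) (Set.pi univ (fun _ : Fin n => S1)) := by
  intro x hx y hy h
  haveI : Nonempty (Fin n) := ⟨⟨0, hn⟩⟩
  obtain ⟨j, hj⟩ := Finite.exists_max (fun i => |(x - y) i|)
  have hsup : (⨆ i, |(x - y) i|) = |(x - y) j| :=
    le_antisymm (ciSup_le hj)
      (le_ciSup (f := fun i => |(x - y) i|) (Set.Finite.bddAbove (Set.finite_range _)) j)
  have h1 : |(x - y) j| = 1 := by
    rw [← hsup]; exact h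
  exact S1_avoid (x j) (hx j (mem_univ j)) (y j) (hy j (mem_univ j)) h1

theorem m1_sup_norm (n : ℕ) (hn : 1 ≤ n) :
    m1 n (fun x => ⨆ i, |x i|) = 1 / 2 ^ n := by
  have hA0meas : MeasurableSet (Set.pi univ (fun _ : Fin n => S1)) :=
    MeasurableSet.univ_pi (fun _ => S1_meas)
  have hmem : (1:ℝ) / 2 ^ n ∈ {d : ℝ | ∃ A : Set (Fin n → ℝ), MeasurableSet A ∧
      AvoidsOne n (fun x => ⨆ i, |x i|) A ∧ d = density n A} :=
    ⟨Set.pi univ (fun _ : Fin n => S1), hA0meas, A0_avoid n hn, (density_S1_pi n hn).symm⟩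
  have hub : ∀ d ∈ {d : ℝ | ∃ A : Set (Fin n → ℝ), MeasurableSet A ∧
      AvoidsOne n (fun x => ⨆ i, |x i|) A ∧ d = density n A}, d ≤ 1 / 2 ^ n := by
    rintro d ⟨A, hA, hav, rfl⟩
    exact density_le n hn A hA hav
  exact le_antisymm (csSup_le ⟨_, hmem⟩ hub) (le_csSup ⟨_, hub⟩ hmem)
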